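/- Let V be a finite-dimensional real inner product space, W : Fin m → V a linearly independent family with Gram matrix M (entries M_{αβ} = ⟨W_α,W_β⟩, inverse entries m_{αβ}), and n ∈ V with n ∉ span{W_1,…,W_m}; set D := ⟨n,n⟩ − Σ_{α,β} m_{αβ}⟨n,W_α⟩⟨n,W_β⟩ (so D ≠ 0). For v ∈ V with ⟨W_α, v⟩ = 0 for all α, define ε := −2⟨n,v⟩/D, λ_k := (2⟨n,v⟩/D)·Σ_ℓ m_{kℓ}⟨n,W_ℓ⟩, and δ(v) := v + Σ_k λ_k W_k + ε·n. Then ‖δ(v)‖ = ‖v‖, i.e., kinetic energy is conserved by the nonholonomic impact. -/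
import Mathlib


open scoped RealInnerProductSpace

/-- The nonholonomic impact map (Theorem 3.2 of the paper) conserves kinetic energy. -/
theorem stmt3 {V : Type*} [NormedAddCommGroup V] [InnerProductSpace ℝ V]
    [FiniteDimensional ℝ V]
    {m : ℕ} (W : Fin m → V) (hW : LinearIndependent ℝ W)
    (M : Matrix (Fin m) (Fin m) ℝ) (hM : ∀ α β, M α β = ⟪W α, W β⟫)
    (n : V) (hn : n ∉ Submodule.span ℝ (Set.range W))
    (D : ℝ)
    (hD : D = ⟪n, n⟫ - ∑ α, ∑ β, M⁻¹ α β * (⟪n, W α⟫ * ⟪n, W β⟫))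
    (v : V) (hv : ∀ α, ⟪W α, v⟫ = 0)
    (ε : ℝ) (hε : ε = -2 * ⟪n, v⟫ / D)
    (lam : Fin m → ℝ)
    (hlam : ∀ k, lam k = (2 * ⟪n, v⟫ / D) * ∑ l, M⁻¹ k l * ⟪n, W l⟫)
    (δv : V) (hδ : δv = v + (∑ k, lam k • W k) + ε • n) :
    ‖δv‖ = ‖v‖ := by
  classical
  set c : Fin m → ℝ := fun k => ⟪n, W k⟫ with hc
  -- M is invertible (Gram matrix of a linearly independent family)
  have hMunit : IsUnit M := by
    rw [← Matrix.mulVec_injective_iff_isUnit]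
    have hker : ∀ x : Fin m → ℝ, M.mulVec x = 0 → x = 0 := by
      intro x hx
      have hsum : (∑ k, x k • W k) = 0 := by
        have h0 : ⟪∑ k, x k • W k, ∑ l, x l • W l⟫ = 0 := by
          rw [inner_sum]
          have : ∀ l ∈ Finset.univ, ⟪∑ k, x k • W k, x l • W l⟫
              = x l * (M.mulVec x) l := by
            intro l _
            simp only [sum_inner, real_inner_smul_left, real_inner_smul_right,
              Matrix.mulVec, dotProduct, Finset.mul_sum]
            apply Finset.sum_congr rfl
            intro k _
            rw [hM l k, real_inner_comm]
            ring
          rw [Finset.sum_congr rfl this, hx]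
          simp
        exact inner_self_eq_zero.mp h0
      have := Fintype.linearIndependent_iff.mp hW x hsum
      funext k; exact this k
    intro x y hxy
    have : M.mulVec (x - y) = 0 := by
      rw [Matrix.mulVec_sub, hxy, sub_self]
    have := hker _ this
    exact sub_eq_zero.mp this
  set a : Fin m → ℝ := M⁻¹.mulVec c with ha
  have hdet : IsUnit M.det := (Matrix.isUnit_iff_isUnit_det M).mp hMunit
  have hMa : M.mulVec a = c := by
    rw [ha, Matrix.mulVec_mulVec, Matrix.mul_nonsing_inv _ hdet, Matrix.one_mulVec]
  set t : ℝ := 2 * ⟪n, v⟫ / D with ht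
  set w : V := (∑ k, a k • W k) - n with hw
  have hδ' : δv = v + t • w := by
    rw [hδ, hw, smul_sub, Finset.smul_sum]
    have hε' : ε = -t := by rw [hε, ht]; ring
    have hlam' : ∀ k, lam k = t * a k := by
      intro k
      rw [hlam k, ht, ha]
      rfl
    rw [hε']
    have : (∑ k, lam k • W k) = ∑ k, t • a k • W k := by
      apply Finset.sum_congr rfl
      intro k _
      rw [hlam' k, mul_smul]
    rw [this]
    module
  -- inner products
  have hvw : ⟪v, w⟫ = -⟪n, v⟫ := by
    rw [hw, inner_sub_right, inner_sum]
    have : ∀ k ∈ Finset.univ, ⟪v, a k • W k⟫ = 0 := by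
      intro k _
      rw [real_inner_smul_right, real_inner_comm, hv k, mul_zero]
    rw [Finset.sum_congr rfl this]
    simp [real_inner_comm]
  have hS : ⟪∑ k, a k • W k, n⟫ = ∑ k, a k * c k := by
    rw [sum_inner]
    apply Finset.sum_congr rfl
    intro k _
    rw [real_inner_smul_left, real_inner_comm]
  have hS1 : ⟪∑ k, a k • W k, ∑ l, a l • W l⟫ = ∑ k, a k * c k := by
    rw [inner_sum]
    have : ∀ l ∈ Finset.univ, ⟪∑ k, a k • W k, a l • W l⟫ = a l * (M.mulVec a) l := by
      intro l _
      simp only [sum_inner, real_inner_smul_left, real_inner_smul_right,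
        Matrix.mulVec, dotProduct, Finset.mul_sum]
      apply Finset.sum_congr rfl
      intro k _
      rw [hM l k, real_inner_comm]
      ring
    rw [Finset.sum_congr rfl this]
    apply Finset.sum_congr rfl
    intro l _
    rw [hMa]
  have hDsum : D = ⟪n, n⟫ - ∑ k, a k * c k := by
    rw [hD]
    congr 1
    rw [ha]
    apply Finset.sum_congr rfl
    intro α _
    rw [Matrix.mulVec, dotProduct, Finset.sum_mul]
    apply Finset.sum_congr rfl
    intro β _
    ring
  have hww : ⟪w, w⟫ = D := by
    rw [hw, inner_sub_left, inner_sub_right, inner_sub_right, hS1, hS,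
      real_inner_comm (∑ k, a k • W k) n, hS, hDsum]
    ring
  -- conclusion
  have hkey : ⟪δv, δv⟫ = ⟪v, v⟫ := by
    rw [hδ']
    simp only [inner_add_add_self, real_inner_smul_left, real_inner_smul_right]
    rw [real_inner_comm v w, hvw, hww]
    by_cases hD0 : D = 0
    · rw [ht, hD0, div_zero]; ring
    · rw [ht]; field_simp; ring
  rw [norm_eq_sqrt_real_inner δv, norm_eq_sqrt_real_inner v, hkey]
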